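/- Let φ: Ω × ℝ → ℝ be a jointly measurable normal convex integrand with φ(ω,·) convex and finite, and suppose sup_{P∈𝒫} E_P[φ(·,x)⁺] < ∞ for all x and sup_{P∈𝒫} E_P[φ(·,0)⁻] < ∞. Then there exists a Borel measurable function f: Ω → ℝ such that φ*(ω, f(ω)) ≤ 1 − φ(ω, 0) for all ω; consequently sup_{P∈𝒫} E_P[φ*(·,f)⁺] < ∞ and sup_{P∈𝒫} E_P[|f|] < ∞. -/

import Mathlib

open MeasureTheory Filter Topology

theorem stmt_7 {Ω : Type*} [TopologicalSpace Ω] [PolishSpace Ω]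
    [MeasurableSpace Ω] [BorelSpace Ω]
    (Ps : Set (Measure Ω)) (hPprob : ∀ P ∈ Ps, IsProbabilityMeasure P)
    (φ : Ω → ℝ → ℝ)
    (hφmeas : Measurable (Function.uncurry φ))
    (hconv : ∀ ω, ConvexOn ℝ Set.univ (φ ω))
    (hplus : ∀ x : ℝ,
      (⨆ P : Ps, ∫⁻ ω, ENNReal.ofReal (max (φ ω x) 0) ∂(P : Measure Ω)) < ⊤)
    (hminus :
      (⨆ P : Ps, ∫⁻ ω, ENNReal.ofReal (max (-(φ ω 0)) 0) ∂(P : Measure Ω)) < ⊤) :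
    ∃ f : Ω → ℝ, Measurable f ∧
      (∀ ω, (⨆ x : ℝ, ((x * f ω - φ ω x : ℝ) : EReal)) ≤ ((1 - φ ω 0 : ℝ) : EReal)) ∧
      (⨆ P : Ps, ∫⁻ ω, ⨆ x : ℝ,
          ENNReal.ofReal (x * f ω - φ ω x) ∂(P : Measure Ω)) < ⊤ ∧
      (⨆ P : Ps, ∫⁻ ω, ENNReal.ofReal |f ω| ∂(P : Measure Ω)) < ⊤ := by
  classical
  -- measurability of sections
  have hsec : ∀ x : ℝ, Measurable fun ω => φ ω x := fun x =>
    hφmeas.comp (measurable_id.prodMk measurable_const)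
  set t : ℕ → ℝ := fun n => 1 / (n + 1) with ht
  have htpos : ∀ n, 0 < t n := fun n => by positivity
  have ht1 : t 0 = 1 := by norm_num [ht]
  set σ : Ω → ℝ → ℝ := fun ω x => (φ ω x - φ ω 0) / x with hσ
  have hmono : ∀ (ω : Ω) {x y : ℝ}, x ≠ 0 → y ≠ 0 → x ≤ y → σ ω x ≤ σ ω y := by
    intro ω x y hx hy hxy
    have := (hconv ω).secant_mono (Set.mem_univ 0) (Set.mem_univ x) (Set.mem_univ y) hx hy hxy
    simpa [hσ] using this
  set I : Ω → EReal := fun ω => ⨅ n : ℕ, ((σ ω (t n) : ℝ) : EReal) with hI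
  have hbelow : ∀ (ω : Ω) (n : ℕ), σ ω (-1) ≤ σ ω (t n) := fun ω n =>
    hmono ω (by norm_num) (htpos n).ne' (by linarith [htpos n])
  have hIbot : ∀ ω, ((σ ω (-1) : ℝ) : EReal) ≤ I ω := fun ω =>
    le_iInf fun n => EReal.coe_le_coe_iff.2 (hbelow ω n)
  have hItop : ∀ ω, I ω ≤ ((σ ω 1 : ℝ) : EReal) := fun ω => by
    have := iInf_le (fun n : ℕ => ((σ ω (t n) : ℝ) : EReal)) 0
    simpa [ht1] using this
  have hInebot : ∀ ω, I ω ≠ ⊥ := fun ω =>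
    fun h => by simpa [h] using hIbot ω
  have hInetop : ∀ ω, I ω ≠ ⊤ := fun ω =>
    fun h => by simpa [h] using hItop ω
  set f : Ω → ℝ := fun ω => (I ω).toReal with hf
  have hfcoe : ∀ ω, ((f ω : ℝ) : EReal) = I ω := fun ω =>
    EReal.coe_toReal (hInetop ω) (hInebot ω)
  have hfmeas : Measurable f := by
    apply Measurable.ereal_toReal
    exact Measurable.iInf fun n =>
      (((hsec (t n)).sub (hsec 0)).div_const (t n)).coe_real_ereal
  have hle : ∀ (ω : Ω) (n : ℕ), f ω ≤ σ ω (t n) := fun ω n => by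
    have : ((f ω : ℝ) : EReal) ≤ ((σ ω (t n) : ℝ) : EReal) := by
      rw [hfcoe]; exact iInf_le _ n
    exact EReal.coe_le_coe_iff.1 this
  have hge : ∀ ω, σ ω (-1) ≤ f ω := fun ω => by
    have : ((σ ω (-1) : ℝ) : EReal) ≤ ((f ω : ℝ) : EReal) := by
      rw [hfcoe]; exact hIbot ω
    exact EReal.coe_le_coe_iff.1 this
  -- subgradient inequality
  have key : ∀ (ω : Ω) (x : ℝ), x * f ω ≤ φ ω x - φ ω 0 := by
    intro ω x
    rcases lt_trichotomy x 0 with hx | hx | hx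
    · -- x < 0 : σ ω x ≤ f ω
      have h1 : ∀ n, σ ω x ≤ σ ω (t n) := fun n =>
        hmono ω hx.ne (htpos n).ne' (le_of_lt (hx.trans (htpos n)))
      have h2 : ((σ ω x : ℝ) : EReal) ≤ I ω := le_iInf fun n => EReal.coe_le_coe_iff.2 (h1 n)
      have h3 : σ ω x ≤ f ω := by
        rw [← hfcoe ω] at h2; exact EReal.coe_le_coe_iff.1 h2
      have := (div_le_iff_of_neg hx).1 h3
      linarith [this]
    · simp [hx]
    · -- x > 0 : f ω ≤ σ ω x
      obtain ⟨n, hn⟩ := exists_nat_gt (1 / x)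
      have htn : t n ≤ x := by
        have h1x : (0:ℝ) < 1 / x := by positivity
        have hn1 : 1 / x < (n:ℝ) + 1 := by linarith
        have : t n < x := by
          rw [ht]
          rw [div_lt_iff₀ (by positivity)]
          rw [div_lt_iff₀ hx] at hn1
          linarith
        exact this.le
      have h1 : f ω ≤ σ ω x := (hle ω n).trans (hmono ω (htpos n).ne' hx.ne' htn)
      have := (le_div_iff₀ hx).1 h1
      linarith [this]
  have key' : ∀ (ω : Ω) (x : ℝ), x * f ω - φ ω x ≤ -(φ ω 0) := fun ω x => by
    linarith [key ω x]
  refine ⟨f, hfmeas, ?_, ?_, ?_⟩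
  · -- EReal sup bound
    intro ω
    refine iSup_le fun x => EReal.coe_le_coe_iff.2 ?_
    linarith [key ω x]
  · -- third: the conjugate integrability
    refine lt_of_le_of_lt ?_ hminus
    refine iSup_le fun P => ?_
    refine le_trans (lintegral_mono fun ω => ?_) (le_iSup (fun P : Ps =>
      ∫⁻ ω, ENNReal.ofReal (max (-(φ ω 0)) 0) ∂(P : Measure Ω)) P)
    refine iSup_le fun x => ENNReal.ofReal_le_ofReal ?_
    exact (key' ω x).trans (le_max_left _ _)
  · -- fourth: |f| integrable uniformly
    have habs : ∀ ω, |f ω| ≤ max (φ ω 1) 0 + max (φ ω (-1)) 0 + max (-(φ ω 0)) 0 := by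
      intro ω
      have h1 : f ω ≤ φ ω 1 - φ ω 0 := by
        have := hle ω 0
        rw [ht1] at this
        simpa [hσ] using this
      have h2 : φ ω 0 - φ ω (-1) ≤ f ω := by
        have := hge ω
        rw [hσ] at this
        simp only [neg_sub] at this
        have h : (φ ω (-1) - φ ω 0) / (-1) = φ ω 0 - φ ω (-1) := by ring
        rw [h] at this
        exact this
      rw [abs_le]
      refine ⟨?_, ?_⟩
      · have ha := le_max_left (φ ω (-1)) (0:ℝ)
        have hb := le_max_left (-(φ ω 0)) (0:ℝ)
        have hc := le_max_right (φ ω 1) (0:ℝ)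
        linarith
      · have ha := le_max_left (φ ω 1) (0:ℝ)
        have hb := le_max_left (-(φ ω 0)) (0:ℝ)
        have hc := le_max_right (φ ω (-1)) (0:ℝ)
        linarith
    set g1 : Ω → ENNReal := fun ω => ENNReal.ofReal (max (φ ω 1) 0) with hg1
    set g2 : Ω → ENNReal := fun ω => ENNReal.ofReal (max (φ ω (-1)) 0) with hg2
    set g3 : Ω → ENNReal := fun ω => ENNReal.ofReal (max (-(φ ω 0)) 0) with hg3
    have hm1 : Measurable g1 := ((hsec 1).max measurable_const).ennreal_ofReal
    have hm2 : Measurable g2 := ((hsec (-1)).max measurable_const).ennreal_ofReal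
    have hptw : ∀ ω, ENNReal.ofReal |f ω| ≤ g1 ω + g2 ω + g3 ω := by
      intro ω
      refine le_trans (ENNReal.ofReal_le_ofReal (habs ω)) ?_
      refine le_trans ENNReal.ofReal_add_le ?_
      exact add_le_add ENNReal.ofReal_add_le le_rfl
    refine lt_of_le_of_lt (iSup_le fun P => ?_)
      (ENNReal.add_lt_top.2 ⟨ENNReal.add_lt_top.2 ⟨hplus 1, hplus (-1)⟩, hminus⟩)
    calc ∫⁻ ω, ENNReal.ofReal |f ω| ∂(P : Measure Ω)
        ≤ ∫⁻ ω, (g1 ω + g2 ω + g3 ω) ∂(P : Measure Ω) := lintegral_mono hptw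
      _ = (∫⁻ ω, g1 ω ∂(P : Measure Ω)) + (∫⁻ ω, g2 ω ∂(P : Measure Ω))
          + (∫⁻ ω, g3 ω ∂(P : Measure Ω)) := by
          rw [lintegral_add_left (f := fun ω => g1 ω + g2 ω) (hm1.add hm2), lintegral_add_left hm1]
      _ ≤ (⨆ P : Ps, ∫⁻ ω, ENNReal.ofReal (max (φ ω 1) 0) ∂(P : Measure Ω))
          + (⨆ P : Ps, ∫⁻ ω, ENNReal.ofReal (max (φ ω (-1)) 0) ∂(P : Measure Ω))
          + (⨆ P : Ps, ∫⁻ ω, ENNReal.ofReal (max (-(φ ω 0)) 0) ∂(P : Measure Ω)) := by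
          gcongr
          · exact le_iSup (fun P : Ps => ∫⁻ ω, g1 ω ∂(P : Measure Ω)) P
          · exact le_iSup (fun P : Ps => ∫⁻ ω, g2 ω ∂(P : Measure Ω)) P
          · exact le_iSup (fun P : Ps => ∫⁻ ω, g3 ω ∂(P : Measure Ω)) P
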